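/- Let ∅=μ_0, μ_1, …, μ_n be an up-down tableau with target residue sequence (i_1, …, i_n), and suppose |i_k − i_{k+1}| > 1 for some 1 ≤ k < n. Then the box added or removed at step k+1 can already be added to, respectively removed from, μ_{k−1}; performing step k+1's operation on μ_{k−1} and then step k's operation yields an up-down tableau ν_0, …, ν_n with ν_j = μ_j for all j ≠ k, of the same shape μ_n, whose target residue sequence is (i_1, …, i_{k−1}, i_{k+1}, i_k, i_{k+2}, …, i_n). -/

import Mathlib

/-- One step of an up-down tableau with explicit box and target residue: `ν` is obtained
from `μ` by adding the box `b` (target residue `col b - row b`) or by removing the box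
`b` (target residue `col b - row b - 1`), the residue being `r`. -/
def UDStepBoxRes (μ ν : YoungDiagram) (b : ℕ × ℕ) (r : ℤ) : Prop :=
  (b ∉ μ.cells ∧ ν.cells = insert b μ.cells ∧ r = (b.2 : ℤ) - (b.1 : ℤ)) ∨
  (b ∈ μ.cells ∧ ν.cells = μ.cells.erase b ∧ r = (b.2 : ℤ) - (b.1 : ℤ) - 1)

lemma udAux_pair_eq {x y : ℕ × ℕ} (h : x = y) : x.1 = y.1 ∧ x.2 = y.2 := by
  rw [h]; exact ⟨rfl, rfl⟩

/-- Inserting an addable box into a lower set gives a lower set. -/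
lemma udAux_lowerSet_insert {s : Finset (ℕ × ℕ)} (hs : IsLowerSet (s : Set (ℕ × ℕ)))
    {c : ℕ × ℕ} (h1 : c.1 = 0 ∨ (c.1 - 1, c.2) ∈ s) (h2 : c.2 = 0 ∨ (c.1, c.2 - 1) ∈ s) :
    IsLowerSet ((insert c s : Finset (ℕ × ℕ)) : Set (ℕ × ℕ)) := by
  intro y x hxy hy
  simp only [Finset.coe_insert, Set.mem_insert_iff, Finset.mem_coe] at hy ⊢
  rcases hy with rfl | hy
  · rcases eq_or_ne x y with rfl | hne
    · exact Or.inl rfl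
    · right
      obtain ⟨hx1, hx2⟩ := Prod.le_def.mp hxy
      rcases lt_or_eq_of_le hx1 with h | h
      · rcases h1 with h0 | h0
        · omega
        · exact hs (a := ((y.1 - 1, y.2) : ℕ × ℕ)) (b := x)
            (Prod.le_def.mpr ⟨by simp; omega, by simpa using hx2⟩) (Finset.mem_coe.mpr h0)
      · have hx2' : x.2 < y.2 := by
          rcases lt_or_eq_of_le hx2 with h' | h'
          · exact h'
          · exact absurd (Prod.ext h h') hne
        rcases h2 with h0 | h0
        · omega
        · exact hs (a := ((y.1, y.2 - 1) : ℕ × ℕ)) (b := x)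
            (Prod.le_def.mpr ⟨by simpa using hx1, by simp; omega⟩) (Finset.mem_coe.mpr h0)
  · exact Or.inr (hs hxy (Finset.mem_coe.mpr hy))

/-- Erasing a removable box from a lower set gives a lower set. -/
lemma udAux_lowerSet_erase {s : Finset (ℕ × ℕ)} (hs : IsLowerSet (s : Set (ℕ × ℕ)))
    {c : ℕ × ℕ} (h1 : (c.1 + 1, c.2) ∉ s) (h2 : (c.1, c.2 + 1) ∉ s) :
    IsLowerSet ((s.erase c : Finset (ℕ × ℕ)) : Set (ℕ × ℕ)) := by
  intro y x hxy hy
  simp only [Finset.coe_erase, Set.mem_diff, Finset.mem_coe, Set.mem_singleton_iff] at hy ⊢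
  obtain ⟨hys, hyc⟩ := hy
  refine ⟨hs hxy (Finset.mem_coe.mpr hys), ?_⟩
  rintro rfl
  obtain ⟨hx1, hx2⟩ := Prod.le_def.mp hxy
  rcases lt_or_eq_of_le hx1 with h | h
  · exact h1 (hs (a := y) (b := ((x.1 + 1, x.2) : ℕ × ℕ))
      (Prod.le_def.mpr ⟨by simp; omega, by simpa using hx2⟩) (Finset.mem_coe.mpr hys))
  · rcases lt_or_eq_of_le hx2 with h' | h'
    · exact h2 (hs (a := y) (b := ((x.1, x.2 + 1) : ℕ × ℕ))
        (Prod.le_def.mpr ⟨by simpa using hx1, by simp; omega⟩) (Finset.mem_coe.mpr hys))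
    · exact hyc (Prod.ext h h').symm

/-- Packaging: once the middle diagram `ν'` with the two swapped steps is found, the
whole swapped tableau exists. -/
lemma udAux_build (n k : ℕ) (T : ℕ → YoungDiagram) (b : ℕ → ℕ × ℕ) (i : ℕ → ℤ)
    (h0 : T 0 = ⊥)
    (hstep : ∀ j, 1 ≤ j → j ≤ n → UDStepBoxRes (T (j - 1)) (T j) (b j) (i j))
    (hk1 : 1 ≤ k) (hk2 : k + 1 ≤ n)
    (ν' : YoungDiagram)
    (rel1 : UDStepBoxRes (T (k - 1)) ν' (b (k + 1)) (i (k + 1)))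
    (rel2 : UDStepBoxRes ν' (T (k + 1)) (b k) (i k)) :
    ∃ ν : ℕ → YoungDiagram,
      ν 0 = ⊥ ∧ (∀ j, j ≠ k → ν j = T j) ∧ ν n = T n ∧
      UDStepBoxRes (ν (k - 1)) (ν k) (b (k + 1)) (i (k + 1)) ∧
      UDStepBoxRes (ν k) (ν (k + 1)) (b k) (i k) ∧
      (∀ j, 1 ≤ j → j ≤ n → j ≠ k → j ≠ k + 1 →
        UDStepBoxRes (ν (j - 1)) (ν j) (b j) (i j)) := by
  refine ⟨fun j => if j = k then ν' else T j, ?_, ?_, ?_, ?_, ?_, ?_⟩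
  · simp only [if_neg (by omega : (0 : ℕ) ≠ k)]; exact h0
  · intro j hj; simp only [if_neg hj]
  · simp only [if_neg (by omega : n ≠ k)]
  · simpa only [if_neg (by omega : k - 1 ≠ k), if_pos rfl, ↓reduceIte] using rel1
  · simpa only [if_neg (by omega : k + 1 ≠ k), if_pos rfl, ↓reduceIte] using rel2
  · intro j h1 h2 h3 h4
    simp only [if_neg (by omega : j - 1 ≠ k), if_neg h3]
    exact hstep j h1 h2

/-- Let `T 0 = ∅, T 1, …, T n` be an up-down tableau whose step `j` (from `T (j-1)` to
`T j`) adds or removes the box `b j` and has target residue `i j`, and suppose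
`|i k - i (k+1)| > 1` for some `1 ≤ k < n`.  Then the box of step `k+1` can already be
added to, respectively removed from, `T (k-1)`; performing step `k+1`'s operation on
`T (k-1)` and then step `k`'s operation yields an up-down tableau `ν` with `ν j = T j`
for all `j ≠ k` (in particular of the same shape `T n`) whose target residue sequence is
obtained from that of `T` by swapping the entries at positions `k` and `k+1`. -/
theorem udTableau_swap_distant_steps (n k : ℕ) (T : ℕ → YoungDiagram)
    (b : ℕ → ℕ × ℕ) (i : ℕ → ℤ)
    (h0 : T 0 = ⊥)
    (hstep : ∀ j, 1 ≤ j → j ≤ n → UDStepBoxRes (T (j - 1)) (T j) (b j) (i j))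
    (hk1 : 1 ≤ k) (hk2 : k + 1 ≤ n)
    (hdist : 1 < |i k - i (k + 1)|) :
    ∃ ν : ℕ → YoungDiagram,
      ν 0 = ⊥ ∧ (∀ j, j ≠ k → ν j = T j) ∧ ν n = T n ∧
      UDStepBoxRes (ν (k - 1)) (ν k) (b (k + 1)) (i (k + 1)) ∧
      UDStepBoxRes (ν k) (ν (k + 1)) (b k) (i k) ∧
      (∀ j, 1 ≤ j → j ≤ n → j ≠ k → j ≠ k + 1 →
        UDStepBoxRes (ν (j - 1)) (ν j) (b j) (i j)) := by
  have ha := hstep k hk1 (by omega)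
  have hc := hstep (k + 1) (by omega) hk2
  simp only [Nat.add_sub_cancel] at hc
  set a : ℕ × ℕ := b k with hba
  set c : ℕ × ℕ := b (k + 1) with hbc
  set s : Finset (ℕ × ℕ) := (T (k - 1)).cells with hsdef
  have hls : IsLowerSet (s : Set (ℕ × ℕ)) := (T (k - 1)).isLowerSet
  have hls1 : IsLowerSet ((T (k + 1)).cells : Set (ℕ × ℕ)) := (T (k + 1)).isLowerSet
  rcases ha with ⟨haM, haC, haR⟩ | ⟨haM, haC, haR⟩ <;>
    rcases hc with ⟨hcM, hcC, hcR⟩ | ⟨hcM, hcC, hcR⟩ <;>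
      rw [haR, hcR, lt_abs] at hdist <;> rw [haC] at hcM hcC
  · -- add a, add c
    have hA : a ≠ c := by
      intro h
      have h1 : a.1 = c.1 := by rw [h]
      have h2 : a.2 = c.2 := by rw [h]
      omega
    have hcS : c ∉ s := fun h => hcM (Finset.mem_insert_of_mem h)
    have hcmem : c ∈ (T (k + 1)).cells := by rw [hcC]; exact Finset.mem_insert_self _ _
    have hn1 : c.1 = 0 ∨ (c.1 - 1, c.2) ∈ s := by
      rcases Nat.eq_zero_or_pos c.1 with h | h
      · exact Or.inl h
      · right
        have hm : (c.1 - 1, c.2) ∈ (T (k + 1)).cells :=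
          hls1 (a := c) (b := ((c.1 - 1, c.2) : ℕ × ℕ))
            (Prod.le_def.mpr ⟨by simp, by simp⟩) (Finset.mem_coe.mpr hcmem)
        rw [hcC] at hm
        rcases Finset.mem_insert.mp hm with h' | hm
        · obtain ⟨h1, h2⟩ := udAux_pair_eq h'; simp at h1 h2; omega
        rcases Finset.mem_insert.mp hm with h' | hm
        · obtain ⟨h1, h2⟩ := udAux_pair_eq h'; simp at h1 h2; omega
        · exact hm
    have hn2 : c.2 = 0 ∨ (c.1, c.2 - 1) ∈ s := by
      rcases Nat.eq_zero_or_pos c.2 with h | h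
      · exact Or.inl h
      · right
        have hm : (c.1, c.2 - 1) ∈ (T (k + 1)).cells :=
          hls1 (a := c) (b := ((c.1, c.2 - 1) : ℕ × ℕ))
            (Prod.le_def.mpr ⟨by simp, by simp⟩) (Finset.mem_coe.mpr hcmem)
        rw [hcC] at hm
        rcases Finset.mem_insert.mp hm with h' | hm
        · obtain ⟨h1, h2⟩ := udAux_pair_eq h'; simp at h1 h2; omega
        rcases Finset.mem_insert.mp hm with h' | hm
        · obtain ⟨h1, h2⟩ := udAux_pair_eq h'; simp at h1 h2; omega
        · exact hm
    refine udAux_build n k T b i h0 hstep hk1 hk2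
      ⟨insert c s, udAux_lowerSet_insert hls hn1 hn2⟩ (Or.inl ⟨hcS, rfl, hcR⟩)
      (Or.inl ⟨?_, ?_, haR⟩)
    · simp only [YoungDiagram.cells, Finset.mem_insert]
      rintro (h | h)
      · exact hA h
      · exact haM h
    · exact hcC.trans (Finset.insert_comm c a s)
  · -- add a, remove c
    have hA : a ≠ c := by
      intro h
      have h1 : a.1 = c.1 := by rw [h]
      have h2 : a.2 = c.2 := by rw [h]
      omega
    have hcS : c ∈ s := by
      rcases Finset.mem_insert.mp hcM with h | h
      · exact absurd h.symm hA
      · exact h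
    have hnot : ∀ d : ℕ × ℕ, c ≤ d → c ≠ d → d ∉ insert a s := by
      intro d hle hne hd
      have hd1 : d ∈ (T (k + 1)).cells := by
        rw [hcC]; exact Finset.mem_erase.mpr ⟨hne.symm, hd⟩
      have : c ∈ (T (k + 1)).cells :=
        hls1 (a := d) (b := c) hle (Finset.mem_coe.mpr hd1)
      rw [hcC] at this
      exact (Finset.mem_erase.mp this).1 rfl
    have hn1 : (c.1 + 1, c.2) ∉ s := fun h =>
      hnot (c.1 + 1, c.2) (Prod.le_def.mpr ⟨by simp, by simp⟩)
        (fun h' => by obtain ⟨h1, h2⟩ := udAux_pair_eq h'; simp at h1)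
        (Finset.mem_insert_of_mem h)
    have hn2 : (c.1, c.2 + 1) ∉ s := fun h =>
      hnot (c.1, c.2 + 1) (Prod.le_def.mpr ⟨by simp, by simp⟩)
        (fun h' => by obtain ⟨h1, h2⟩ := udAux_pair_eq h'; simp at h2)
        (Finset.mem_insert_of_mem h)
    refine udAux_build n k T b i h0 hstep hk1 hk2
      ⟨s.erase c, udAux_lowerSet_erase hls hn1 hn2⟩ (Or.inr ⟨hcS, rfl, hcR⟩)
      (Or.inl ⟨?_, ?_, haR⟩)
    · simp only [YoungDiagram.cells, Finset.mem_erase]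
      rintro ⟨-, h⟩; exact haM h
    · exact hcC.trans (Finset.erase_insert_of_ne hA)
  · -- remove a, add c
    have hA : a ≠ c := by
      intro h
      have h1 : a.1 = c.1 := by rw [h]
      have h2 : a.2 = c.2 := by rw [h]
      omega
    have hcS : c ∉ s := fun h => hcM (Finset.mem_erase.mpr ⟨fun h' => hA h'.symm, h⟩)
    have hcmem : c ∈ (T (k + 1)).cells := by rw [hcC]; exact Finset.mem_insert_self _ _
    have hn : ∀ d : ℕ × ℕ, d ≤ c → d ≠ c → d ∈ s := by
      intro d hle hne
      have hm : d ∈ (T (k + 1)).cells :=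
        hls1 (a := c) (b := d) hle (Finset.mem_coe.mpr hcmem)
      rw [hcC] at hm
      rcases Finset.mem_insert.mp hm with h' | hm
      · exact absurd h' hne
      · exact (Finset.mem_erase.mp hm).2
    have hn1 : c.1 = 0 ∨ (c.1 - 1, c.2) ∈ s := by
      rcases Nat.eq_zero_or_pos c.1 with h | h
      · exact Or.inl h
      · right
        refine hn _ (Prod.le_def.mpr ⟨by simp, by simp⟩) ?_
        intro h'; obtain ⟨h1, h2⟩ := udAux_pair_eq h'; simp at h1; omega
    have hn2 : c.2 = 0 ∨ (c.1, c.2 - 1) ∈ s := by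
      rcases Nat.eq_zero_or_pos c.2 with h | h
      · exact Or.inl h
      · right
        refine hn _ (Prod.le_def.mpr ⟨by simp, by simp⟩) ?_
        intro h'; obtain ⟨h1, h2⟩ := udAux_pair_eq h'; simp at h2; omega
    refine udAux_build n k T b i h0 hstep hk1 hk2
      ⟨insert c s, udAux_lowerSet_insert hls hn1 hn2⟩ (Or.inl ⟨hcS, rfl, hcR⟩)
      (Or.inr ⟨?_, ?_, haR⟩)
    · exact Finset.mem_insert_of_mem haM
    · exact hcC.trans (Finset.erase_insert_of_ne (fun h => hA h.symm)).symm
  · -- remove a, remove c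
    have hA : a ≠ c := by
      intro h
      have h1 : a.1 = c.1 := by rw [h]
      have h2 : a.2 = c.2 := by rw [h]
      omega
    have hcS : c ∈ s := (Finset.mem_erase.mp hcM).2
    have hnot : ∀ d : ℕ × ℕ, c ≤ d → c ≠ d → d ≠ a → d ∉ s := by
      intro d hle hne hda hd
      have hd1 : d ∈ (T (k + 1)).cells := by
        rw [hcC]
        exact Finset.mem_erase.mpr ⟨hne.symm, Finset.mem_erase.mpr ⟨hda, hd⟩⟩
      have : c ∈ (T (k + 1)).cells :=
        hls1 (a := d) (b := c) hle (Finset.mem_coe.mpr hd1)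
      rw [hcC] at this
      exact (Finset.mem_erase.mp this).1 rfl
    have hn1 : (c.1 + 1, c.2) ∉ s :=
      hnot (c.1 + 1, c.2) (Prod.le_def.mpr ⟨by simp, by simp⟩)
        (fun h' => by obtain ⟨h1, h2⟩ := udAux_pair_eq h'; simp at h1)
        (fun h' => by obtain ⟨h1, h2⟩ := udAux_pair_eq h'; simp at h1 h2; omega)
    have hn2 : (c.1, c.2 + 1) ∉ s :=
      hnot (c.1, c.2 + 1) (Prod.le_def.mpr ⟨by simp, by simp⟩)
        (fun h' => by obtain ⟨h1, h2⟩ := udAux_pair_eq h'; simp at h2)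
        (fun h' => by obtain ⟨h1, h2⟩ := udAux_pair_eq h'; simp at h1 h2; omega)
    refine udAux_build n k T b i h0 hstep hk1 hk2
      ⟨s.erase c, udAux_lowerSet_erase hls hn1 hn2⟩ (Or.inr ⟨hcS, rfl, hcR⟩)
      (Or.inr ⟨?_, ?_, haR⟩)
    · exact Finset.mem_erase.mpr ⟨hA, haM⟩
    · exact hcC.trans Finset.erase_right_comm
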